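/- Let P = {x ∈ ℝ^n : Ax = b, Bx ≤ d} be pointed. If g is a circuit of P, then the pair (g, Bg) is a circuit of the standard-form system with constraint matrix (A 0; B I), i.e., (g, Bg) is support-minimal in the kernel of that matrix. -/
import Mathlib

lemma pointed_ker_zero {n : ℕ} {m : Type*} [Fintype m] (M : Matrix m (Fin n) ℝ)
    (h : M.rank = n) (x : Fin n → ℝ) (hx : M.mulVec x = 0) : x = 0 := by
  have hker : LinearMap.ker M.mulVecLin = ⊥ := by
    have h1 := M.mulVecLin.finrank_range_add_finrank_ker
    rw [show Module.finrank ℝ (Fin n → ℝ) = n from Module.finrank_fin_fun ℝ] at h1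
    have : Module.finrank ℝ (LinearMap.ker M.mulVecLin) = 0 := by
      have : M.rank = Module.finrank ℝ (LinearMap.range M.mulVecLin) := rfl
      omega
    exact Submodule.finrank_eq_zero.mp this
  have : x ∈ LinearMap.ker M.mulVecLin := by
    simpa [Matrix.mulVecLin_apply] using hx
  simpa [hker] using this

/-- If `g` is a circuit of the pointed polyhedron
`P = {x : Ax = b, Bx ≤ d}`, then the pair `(g, -Bg)` (which lies in the kernel of the
standard-form matrix `(A 0; B I)`) is a circuit of that standard-form system, i.e. it is
support-minimal over the nonzero elements of that kernel. -/
theorem circuit_gives_standard_form_circuit {n mA mB : ℕ}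
    (A : Matrix (Fin mA) (Fin n) ℝ) (B : Matrix (Fin mB) (Fin n) ℝ)
    (hpointed : (Matrix.fromRows A B).rank = n)
    (g : Fin n → ℝ) (hg0 : g ≠ 0) (hgA : A.mulVec g = 0)
    (hmin : ¬ ∃ y : Fin n → ℝ, y ≠ 0 ∧ A.mulVec y = 0 ∧
      {j | B.mulVec y j ≠ 0} ⊂ {j | B.mulVec g j ≠ 0}) :
    ¬ ∃ w : (Fin n ⊕ Fin mB) → ℝ, w ≠ 0 ∧
      A.mulVec (w ∘ Sum.inl) = 0 ∧
      (∀ i, w (Sum.inr i) = -(B.mulVec (w ∘ Sum.inl) i)) ∧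
      {j | w j ≠ 0} ⊂ {j | Sum.elim g (fun i => -(B.mulVec g i)) j ≠ 0} := by
  rintro ⟨w, hw0, hwA, hwI, hsub, hnsup⟩
  set y : Fin n → ℝ := w ∘ Sum.inl with hy
  -- pointedness
  have hpt : ∀ x : Fin n → ℝ, A.mulVec x = 0 → B.mulVec x = 0 → x = 0 := by
    intro x hxA hxB
    apply pointed_ker_zero (Matrix.fromRows A B) hpointed
    rw [Matrix.fromRows_mulVec, hxA, hxB]
    ext (i | i) <;> rfl
  have hy0 : y ≠ 0 := by
    intro h
    apply hw0
    funext j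
    cases j with
    | inl j => exact congrFun h j
    | inr i => rw [hwI i, h]; simp
  -- support inclusions from hsub
  have hsubl : ∀ j, y j ≠ 0 → g j ≠ 0 := fun j hj => hsub hj
  have hsubr : ∀ i, B.mulVec y i ≠ 0 → B.mulVec g i ≠ 0 := by
    intro i hi
    have : w (Sum.inr i) ≠ 0 := by rw [hwI i]; simpa using hi
    simpa using hsub this
  by_cases hstrict : {j | B.mulVec y j ≠ 0} ⊂ {j | B.mulVec g j ≠ 0}
  · exact hmin ⟨y, hy0, hwA, hstrict⟩
  -- B-supports are equal
  have heq : {j | B.mulVec y j ≠ 0} = {j | B.mulVec g j ≠ 0} :=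
    Set.Subset.antisymm (fun j hj => hsubr j hj)
      (by by_contra hc; exact hstrict ⟨fun j hj => hsubr j hj, hc⟩)
  have hBg0 : B.mulVec g ≠ 0 := by
    intro h; exact hg0 (hpt g hgA h)
  obtain ⟨i0, hi0⟩ : ∃ i, B.mulVec g i ≠ 0 := by
    by_contra h; push_neg at h; exact hBg0 (funext h)
  have hyi0 : B.mulVec y i0 ≠ 0 := by
    have : i0 ∈ {j | B.mulVec g j ≠ 0} := hi0
    rw [← heq] at this; exact this
  set c : ℝ := B.mulVec g i0 / B.mulVec y i0 with hc
  have hcne : c ≠ 0 := div_ne_zero hi0 hyi0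
  set y' : Fin n → ℝ := g - c • y with hy'
  have hAy' : A.mulVec y' = 0 := by
    rw [hy', Matrix.mulVec_sub, Matrix.mulVec_smul, hgA, hwA]
    simp
  have hBy' : ∀ i, B.mulVec y' i = B.mulVec g i - c * B.mulVec y i := by
    intro i
    rw [hy', Matrix.mulVec_sub, Matrix.mulVec_smul]
    simp
  have hBy'i0 : B.mulVec y' i0 = 0 := by
    rw [hBy' i0, hc, div_mul_cancel₀ _ hyi0, sub_self]
  have hsub' : {j | B.mulVec y' j ≠ 0} ⊆ {j | B.mulVec g j ≠ 0} := by
    intro i hi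
    by_contra hgi
    simp only [Set.mem_setOf_eq, not_not] at hgi
    have hyi : B.mulVec y i = 0 := by
      by_contra h
      have : i ∈ {j | B.mulVec y j ≠ 0} := h
      rw [heq] at this
      exact this hgi
    exact hi (by rw [hBy' i, hgi, hyi]; ring)
  have hy'0 : y' ≠ 0 := by
    intro h
    -- then g = c • y, so all supports coincide, contradicting strictness
    have hgcy : g = c • y := by
      have := sub_eq_zero.mp (hy' ▸ h)
      exact this
    apply hnsup
    intro j hj
    cases j with
    | inl j =>
      simp only [Set.mem_setOf_eq, Sum.elim_inl] at hj
      have : y j ≠ 0 := by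
        intro h0
        apply hj
        rw [hgcy]; simp [h0]
      exact this
    | inr i =>
      simp only [Set.mem_setOf_eq, Sum.elim_inr, neg_ne_zero] at hj
      have : B.mulVec y i ≠ 0 := by
        have : i ∈ {j | B.mulVec g j ≠ 0} := hj
        rwa [← heq] at this
      simp only [Set.mem_setOf_eq, hwI i, neg_ne_zero]
      exact this
  exact hmin ⟨y', hy'0, hAy',
    ⟨hsub', fun hge => (hge hi0 : B.mulVec y' i0 ≠ 0) hBy'i0⟩⟩
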